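/- For every n ∈ ℕ, the n(n+1) × n(n+1) integer matrix M_A(n) = R(n) ⊗ R(n)ᵀ + L(n) ⊗ R(n)ᵀ + R(n) ⊗ L(n)ᵀ − L(n) ⊗ L(n)ᵀ has cokernel coker M_A(n) ≅ ℤ/2ℤ ⊕ ℤ/4ℤ ⊕ ⋯ ⊕ ℤ/2^n ℤ, the direct sum of the cyclic groups ℤ/2^k ℤ for k = 1, …, n. -/

import Mathlib

open Matrix
open scoped Kronecker

/-- The `n × (n+1)` matrix `L(n)`: the identity followed by a null column. -/
def Lmat (n : ℕ) : Matrix (Fin n) (Fin (n + 1)) ℤ :=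
  Matrix.of fun i j => if (j : ℕ) = (i : ℕ) then 1 else 0

/-- The `n × (n+1)` matrix `R(n)`: a null column followed by the identity. -/
def Rmat (n : ℕ) : Matrix (Fin n) (Fin (n + 1)) ℤ :=
  Matrix.of fun i j => if (j : ℕ) = (i : ℕ) + 1 then 1 else 0

/-- The Kasteleyn–Percus matrix of the Aztec diamond of order `n`:
`M_A(n) = R(n) ⊗ R(n)ᵀ + L(n) ⊗ R(n)ᵀ + R(n) ⊗ L(n)ᵀ - L(n) ⊗ L(n)ᵀ`. -/
def aztecMat (n : ℕ) : Matrix (Fin n × Fin (n + 1)) (Fin (n + 1) × Fin n) ℤ :=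
  Rmat n ⊗ₖ (Rmat n)ᵀ + Lmat n ⊗ₖ (Rmat n)ᵀ + Rmat n ⊗ₖ (Lmat n)ᵀ - Lmat n ⊗ₖ (Lmat n)ᵀ

open Finset

/-- Alternating-sign Pascal involution. -/
lemma alt_pascal (a b N : ℕ) (ha : a < N) :
    ∑ k ∈ range N, (-1:ℤ)^k * (a.choose k) * (k.choose b) =
      if a = b then (-1:ℤ)^a else 0 := by
  by_cases hba : b ≤ a
  · have h1 : ∀ k ∈ range N, (-1:ℤ)^k * (a.choose k) * (k.choose b)
        = if k ∈ Finset.Icc b a then (-1:ℤ)^k * (a.choose k) * (k.choose b) else 0 := by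
      intro k _
      by_cases h : k ∈ Finset.Icc b a
      · rw [if_pos h]
      · rw [if_neg h]
        simp only [Finset.mem_Icc, not_and_or, not_le] at h
        rcases h with h | h
        · rw [Nat.choose_eq_zero_of_lt h]; ring
        · rw [Nat.choose_eq_zero_of_lt h]; ring
    rw [Finset.sum_congr rfl h1, Finset.sum_ite_mem]
    have hsub : Finset.Icc b a ⊆ range N := by
      intro k hk; simp only [Finset.mem_Icc] at hk; simp; omega
    rw [Finset.inter_eq_right.mpr hsub]
    rw [← Finset.Ico_add_one_right_eq_Icc, Finset.sum_Ico_eq_sum_range]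
    have h2 : ∀ m ∈ range (a + 1 - b), (-1:ℤ)^(b+m) * (a.choose (b+m)) * ((b+m).choose b)
        = ((-1:ℤ)^b * a.choose b) * ((-1:ℤ)^m * ((a-b).choose m)) := by
      intro m hm
      simp only [Finset.mem_range] at hm
      have key : a.choose (b+m) * (b+m).choose b = a.choose b * ((a-b).choose m) := by
        have := Nat.choose_mul (n := a) (k := b + m) (s := b) (by omega)
        simpa [Nat.add_sub_cancel_left] using this
      have key' : ((a.choose (b+m) : ℤ)) * ((b+m).choose b) = (a.choose b : ℤ) * ((a-b).choose m) := by
        exact_mod_cast congrArg (Nat.cast : ℕ → ℤ) key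
      calc (-1:ℤ)^(b+m) * (a.choose (b+m)) * ((b+m).choose b)
          = ((-1:ℤ)^b * (-1)^m) * ((a.choose (b+m) : ℤ) * ((b+m).choose b)) := by rw [pow_add]; ring
        _ = ((-1:ℤ)^b * (-1)^m) * ((a.choose b : ℤ) * ((a-b).choose m)) := by rw [key']
        _ = (-1:ℤ)^b * (a.choose b) * ((-1:ℤ)^m * ((a-b).choose m)) := by ring
    rw [Finset.sum_congr rfl h2, ← Finset.mul_sum]
    have hr : a + 1 - b = (a - b) + 1 := by omega
    rw [hr, Int.alternating_sum_range_choose]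
    rcases eq_or_ne a b with h | h
    · simp [h]
    · rw [if_neg (by omega), if_neg h, mul_zero]
  · push_neg at hba
    have h1 : ∀ k ∈ range N, (-1:ℤ)^k * (a.choose k) * (k.choose b) = 0 := by
      intro k _
      by_cases h : k ≤ a
      · rw [Nat.choose_eq_zero_of_lt (lt_of_le_of_lt h hba)]; ring
      · push_neg at h; rw [Nat.choose_eq_zero_of_lt h]; ring
    rw [Finset.sum_congr rfl h1, Finset.sum_const_zero, if_neg (by omega)]


def Uf (p d : ℕ) : ℤ :=
  (if d = 0 then 1 else 0) + ∑ j ∈ range d, (2:ℤ)^(j+1) * ((d-1).choose j : ℤ) * (p.choose (j+1) : ℤ)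

def ff (p d : ℕ) : ℤ := (-1)^(p+d) * Uf p d

lemma key_id (e p : ℕ) :
    ∑ j ∈ range (e+1), (2:ℤ)^(j+1) * (e.choose j) * (p.choose j)
      = 2 + ∑ j ∈ range e, (2:ℤ)^(j+2) * (e.choose (j+1)) * (p.choose (j+1)) := by
  rw [Finset.sum_range_succ']
  rw [add_comm]
  simp

lemma choose_succ_succ_int (e j : ℕ) :
    ((e+1).choose (j+1) : ℤ) = (e.choose j : ℤ) + (e.choose (j+1) : ℤ) := by
  exact_mod_cast congrArg (Nat.cast : ℕ → ℤ) (Nat.choose_succ_succ e j)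

lemma T_eq (p d : ℕ) :
    ∑ j ∈ range (d+1), (2:ℤ)^(j+1) * (d.choose j) * (p.choose j) = Uf p d + Uf (p+1) d := by
  cases d with
  | zero => simp [Uf]
  | succ e =>
    rw [key_id (e+1) p]
    have hR : Uf p (e+1) + Uf (p+1) (e+1)
        = ∑ j ∈ range (e+1), (2:ℤ)^(j+2) * (e.choose j) * (p.choose (j+1))
          + ∑ j ∈ range (e+1), (2:ℤ)^(j+1) * (e.choose j) * (p.choose j) := by
      simp only [Uf, if_neg (Nat.succ_ne_zero e), Nat.add_sub_cancel]
      rw [zero_add, zero_add, ← Finset.sum_add_distrib, ← Finset.sum_add_distrib]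
      apply Finset.sum_congr rfl
      intro j _
      rw [choose_succ_succ_int p j]
      ring
    rw [hR, key_id e p]
    have hL2 : ∑ j ∈ range (e+1), (2:ℤ)^(j+2) * ((e+1).choose (j+1)) * (p.choose (j+1))
        = ∑ j ∈ range (e+1), (2:ℤ)^(j+2) * (e.choose j) * (p.choose (j+1))
          + ∑ j ∈ range e, (2:ℤ)^(j+2) * (e.choose (j+1)) * (p.choose (j+1)) := by
      have : ∑ j ∈ range (e+1), (2:ℤ)^(j+2) * (e.choose (j+1)) * (p.choose (j+1))
          = ∑ j ∈ range e, (2:ℤ)^(j+2) * (e.choose (j+1)) * (p.choose (j+1)) := by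
        rw [Finset.sum_range_succ, Nat.choose_succ_self]
        simp
      rw [← this, ← Finset.sum_add_distrib]
      apply Finset.sum_congr rfl
      intro j _
      rw [choose_succ_succ_int e j]
      ring
    rw [hL2]
    ring

lemma U_rec (p d : ℕ) : Uf (p+1) (d+1) = Uf p d + Uf (p+1) d + Uf p (d+1) := by
  have hsplit : Uf (p+1) (d+1)
      = ∑ j ∈ range (d+1), (2:ℤ)^(j+1) * (d.choose j) * (p.choose j) + Uf p (d+1) := by
    simp only [Uf, if_neg (Nat.succ_ne_zero d), Nat.add_sub_cancel, zero_add]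
    rw [← Finset.sum_add_distrib]
    apply Finset.sum_congr rfl
    intro j _
    rw [choose_succ_succ_int p j]
    ring
  rw [hsplit, T_eq]

lemma ff_rec (p d : ℕ) : ff (p+1) (d+1) = ff p d - ff (p+1) d - ff p (d+1) := by
  simp only [ff, U_rec p d]
  have h1 : (-1:ℤ)^(p+1+(d+1)) = (-1)^(p+d) := by
    have : p+1+(d+1) = (p+d) + 2 := by omega
    rw [this, pow_add]; norm_num
  have h2 : (-1:ℤ)^(p+1+d) = -(-1)^(p+d) := by rw [Nat.add_right_comm, pow_succ]; ring
  have h3 : (-1:ℤ)^(p+(d+1)) = -(-1)^(p+d) := by rw [← Nat.add_assoc, pow_succ]; ring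
  rw [h1, h2, h3]; ring

lemma ff_zero (d : ℕ) : ff 0 d = if d = 0 then 1 else 0 := by
  cases d with
  | zero => simp [ff, Uf]
  | succ e => simp [ff, Uf, Nat.choose_eq_zero_of_lt (Nat.succ_pos _)]

lemma ff_d_zero (p : ℕ) : ff p 0 = (-1)^p := by simp [ff, Uf]

lemma ff_succ_zero (p : ℕ) : ff (p+1) 0 = - ff p 0 := by
  rw [ff_d_zero, ff_d_zero, pow_succ]; ring

/-- The Delannoy-type identity for the relation vectors. -/
lemma ff_diff (r k : ℕ) :
    ff (r+1) k - ff r k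
      = (-1:ℤ)^(k+r+1) * ∑ j ∈ range (k+1), (2:ℤ)^(j+1) * (k.choose j) * (r.choose j) := by
  rw [T_eq r k]
  simp only [ff]
  have h1 : (-1:ℤ)^(r+1+k) = -(-1:ℤ)^(r+k) := by rw [Nat.add_right_comm, pow_succ]; ring
  have h2 : (-1:ℤ)^(k+r+1) = -(-1:ℤ)^(r+k) := by rw [Nat.add_comm k r, pow_succ]; ring
  rw [h1, h2]
  ring

/-- Coefficient of the reduced representative. -/
def cff (i k p : ℕ) : ℤ := if i ≤ k then ff p (k - i) else 0

lemma cff_rec (i k p : ℕ) :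
    cff i k (p+1) = cff (i+1) k p - cff (i+1) k (p+1) - cff i k p := by
  rcases lt_trichotomy k i with h | h | h
  · simp [cff, if_neg (by omega : ¬ i ≤ k), if_neg (by omega : ¬ i+1 ≤ k), if_neg (by omega : ¬ i < k)]
  · subst h
    simp only [cff, if_pos (le_refl k), if_neg (by omega : ¬ k+1 ≤ k), Nat.sub_self]
    rw [ff_succ_zero]; ring
  · have h1 : i + 1 ≤ k := h
    have h2 : k - i = (k - (i+1)) + 1 := by omega
    simp only [cff, if_pos (le_of_lt h), if_pos h1, h2]
    rw [ff_rec]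
lemma cff_bd (i k p : ℕ) (h : k ≤ i) : cff i k (p+1) = - cff i k p := by
  rcases eq_or_lt_of_le h with h | h
  · subst h; simp only [cff, if_pos (le_refl k), Nat.sub_self, ff_succ_zero]
  · simp [cff, if_neg (by omega : ¬ i ≤ k)]
lemma cff_zero (i k : ℕ) : cff i k 0 = if k = i then 1 else 0 := by
  rcases lt_trichotomy k i with h | h | h
  · simp [cff, if_neg (by omega : ¬ i ≤ k), if_neg (by omega : ¬ k = i)]
  · subst h; simp [cff, ff_zero]
  · rw [cff, if_pos (le_of_lt h), ff_zero, if_neg (by omega), if_neg (by omega)]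

lemma aztec_apply {n : ℕ} (i : Fin n) (p : Fin (n+1)) (q : Fin (n+1)) (r : Fin n) :
    aztecMat n (i,p) (q,r) =
      ((if q = i.succ then (1:ℤ) else 0) + (if q = i.castSucc then 1 else 0))
          * (if p = r.succ then 1 else 0)
      + ((if q = i.succ then (1:ℤ) else 0) - (if q = i.castSucc then 1 else 0))
          * (if p = r.castSucc then 1 else 0) := by
  have e1 : ((q:ℕ) = (i:ℕ) + 1) = (q = i.succ) := by
    simp [Fin.ext_iff]
  have e2 : ((q:ℕ) = (i:ℕ)) = (q = i.castSucc) := by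
    simp [Fin.ext_iff]
  have e3 : ((p:ℕ) = (r:ℕ) + 1) = (p = r.succ) := by
    simp [Fin.ext_iff]
  have e4 : ((p:ℕ) = (r:ℕ)) = (p = r.castSucc) := by
    simp [Fin.ext_iff]
  simp only [aztecMat, Matrix.add_apply, Matrix.sub_apply, Matrix.kroneckerMap_apply,
    Lmat, Rmat, Matrix.transpose_apply, Matrix.of_apply, e1, e2, e3, e4]
  ring

lemma sum_succ_pick {n : ℕ} (q : Fin (n+1)) (g : Fin n → ℤ) :
    (∑ i : Fin n, if q = i.succ then g i else 0)
      = if h : (q:ℕ) - 1 < n ∧ 1 ≤ (q:ℕ) then g ⟨(q:ℕ)-1, h.1⟩ else 0 := by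
  by_cases h : (q:ℕ) - 1 < n ∧ 1 ≤ (q:ℕ)
  · rw [dif_pos h, Finset.sum_eq_single (⟨(q:ℕ)-1, h.1⟩ : Fin n)]
    · rw [if_pos]; simp [Fin.ext_iff]; omega
    · intro b _ hb; rw [if_neg]; simp only [Fin.ext_iff, Fin.val_succ]
      intro hc; apply hb; simp [Fin.ext_iff]; omega
    · intro h'; exact absurd (Finset.mem_univ _) h'
  · rw [dif_neg h]
    apply Finset.sum_eq_zero; intro i _; rw [if_neg]
    simp only [Fin.ext_iff, Fin.val_succ]
    intro hc; apply h; constructor <;> omega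

lemma sum_castSucc_pick {n : ℕ} (q : Fin (n+1)) (g : Fin n → ℤ) :
    (∑ i : Fin n, if q = i.castSucc then g i else 0)
      = if h : (q:ℕ) < n then g ⟨(q:ℕ), h⟩ else 0 := by
  by_cases h : (q:ℕ) < n
  · rw [dif_pos h, Finset.sum_eq_single (⟨(q:ℕ), h⟩ : Fin n)]
    · rw [if_pos]; simp [Fin.ext_iff]
    · intro b _ hb; rw [if_neg]; simp only [Fin.ext_iff, Fin.coe_castSucc]
      intro hc; apply hb; simp [Fin.ext_iff]; omega
    · intro h'; exact absurd (Finset.mem_univ _) h'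
  · rw [dif_neg h]
    apply Finset.sum_eq_zero; intro i _; rw [if_neg]
    simp only [Fin.ext_iff, Fin.coe_castSucc]
    intro hc; apply h; omega

/-- The key column computation: the `cff`-transform of each column of the Aztec matrix. -/
lemma colsum {n : ℕ} (q : Fin (n+1)) (r : Fin n) (k : Fin n) :
    ∑ ip : Fin n × Fin (n+1), cff (ip.1:ℕ) (k:ℕ) (ip.2:ℕ) * aztecMat n ip (q,r)
      = if (q:ℕ) = 0 then ff ((r:ℕ)+1) (k:ℕ) - ff (r:ℕ) (k:ℕ) else 0 := by
  rw [Fintype.sum_prod_type]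
  have inner : ∀ i : Fin n,
      (∑ p : Fin (n+1), cff (i:ℕ) (k:ℕ) (p:ℕ) * aztecMat n (i,p) (q,r))
      = (if q = i.succ then (cff (i:ℕ) (k:ℕ) ((r:ℕ)+1) + cff (i:ℕ) (k:ℕ) (r:ℕ)) else 0)
        + (if q = i.castSucc then (cff (i:ℕ) (k:ℕ) ((r:ℕ)+1) - cff (i:ℕ) (k:ℕ) (r:ℕ)) else 0) := by
    intro i
    have expand : ∀ p : Fin (n+1), cff (i:ℕ) (k:ℕ) (p:ℕ) * aztecMat n (i,p) (q,r)
        = (if p = r.succ then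
            ((if q = i.succ then (1:ℤ) else 0) + (if q = i.castSucc then 1 else 0))
              * cff (i:ℕ) (k:ℕ) (p:ℕ) else 0)
          + (if p = r.castSucc then
            ((if q = i.succ then (1:ℤ) else 0) - (if q = i.castSucc then 1 else 0))
              * cff (i:ℕ) (k:ℕ) (p:ℕ) else 0) := by
      intro p
      have hner : (r.succ : Fin (n+1)) ≠ r.castSucc := by simp [Fin.ext_iff]
      rw [aztec_apply]
      by_cases h1 : p = r.succ <;> by_cases h2 : p = r.castSucc
      · exfalso; rw [h1] at h2; exact hner h2
      · simp [h1, h2, hner, hner.symm]; ring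
      · simp [h1, h2, hner, hner.symm]; ring
      · simp [h1, h2]
    rw [Finset.sum_congr rfl (fun p _ => expand p), Finset.sum_add_distrib,
      Fintype.sum_ite_eq' r.succ, Fintype.sum_ite_eq' r.castSucc]
    simp only [Fin.val_succ, Fin.coe_castSucc]
    have hnei : (i.succ : Fin (n+1)) ≠ i.castSucc := by simp [Fin.ext_iff]
    by_cases h1 : q = i.succ <;> by_cases h2 : q = i.castSucc
    · exfalso; rw [h1] at h2; exact hnei h2
    all_goals simp [h1, h2, hnei, hnei.symm] <;> ring
  rw [Finset.sum_congr rfl (fun i _ => inner i), Finset.sum_add_distrib,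
    sum_succ_pick, sum_castSucc_pick]
  have hn : 0 < n := k.pos -- k : Fin n nonempty
  by_cases hq0 : (q:ℕ) = 0
  · rw [if_pos hq0, dif_neg (by omega), dif_pos (by omega : (q:ℕ) < n)]
    simp only [hq0, zero_add]
    show cff 0 (k:ℕ) ((r:ℕ)+1) - cff 0 (k:ℕ) (r:ℕ) = _
    simp [cff]
  · rw [if_neg hq0]
    by_cases hqn : (q:ℕ) < n
    · rw [dif_pos (by omega : (q:ℕ) - 1 < n ∧ 1 ≤ (q:ℕ)), dif_pos hqn]
      have := cff_rec ((q:ℕ)-1) (k:ℕ) (r:ℕ)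
      have hq1 : (q:ℕ) - 1 + 1 = (q:ℕ) := by omega
      rw [hq1] at this
      show cff ((q:ℕ)-1) (k:ℕ) ((r:ℕ)+1) + cff ((q:ℕ)-1) (k:ℕ) (r:ℕ)
          + (cff (q:ℕ) (k:ℕ) ((r:ℕ)+1) - cff (q:ℕ) (k:ℕ) (r:ℕ)) = 0
      linarith [this]
    · rw [dif_pos (by omega : (q:ℕ) - 1 < n ∧ 1 ≤ (q:ℕ)), dif_neg hqn, add_zero]
      have hqn' : (q:ℕ) = n := by omega
      have := cff_bd ((q:ℕ)-1) (k:ℕ) (r:ℕ) (by omega)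
      show cff ((q:ℕ)-1) (k:ℕ) ((r:ℕ)+1) + cff ((q:ℕ)-1) (k:ℕ) (r:ℕ) = 0
      linarith [this]
/-- Coefficient matrix: row `k`, column `(i,p)`, entry `cff i k p`. -/
def Cmat (n : ℕ) : Matrix (Fin n) (Fin n × Fin (n+1)) ℤ :=
  Matrix.of fun k ip => cff (ip.1:ℕ) (k:ℕ) (ip.2:ℕ)

/-- Section matrix: places a vector indexed by `Fin n` in the `p = 0` column. -/
def Smat (n : ℕ) : Matrix (Fin n × Fin (n+1)) (Fin n) ℤ :=
  Matrix.of fun kq k' => if (kq.2:ℕ) = 0 ∧ kq.1 = k' then 1 else 0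

/-- Reduced representative of the basis vector `e_{(i,p)}`. -/
def redv (n : ℕ) (i p : ℕ) : Fin n × Fin (n+1) → ℤ :=
  fun kq => if (kq.2:ℕ) = 0 then cff i (kq.1:ℕ) p else 0

lemma single_pair {n : ℕ} (a k : Fin n) (b q : Fin (n+1)) :
    (Pi.single (a,b) (1:ℤ) : Fin n × Fin (n+1) → ℤ) (k,q)
      = if ((k:ℕ) = (a:ℕ) ∧ (q:ℕ) = (b:ℕ)) then (1:ℤ) else 0 := by
  rw [Pi.single_apply]
  congr 1
  simp [Prod.ext_iff, Fin.ext_iff]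

lemma aztec_colv {n : ℕ} (q : Fin (n+1)) (r : Fin n) :
    (aztecMat n).mulVec (Pi.single (q,r) 1)
      = fun kq => aztecMat n kq (q,r) := by
  funext kq
  simp [Matrix.mulVec_single]

lemma aztec_entry {n : ℕ} (k : Fin n) (q' : Fin (n+1)) (q : Fin (n+1)) (r : Fin n) :
    aztecMat n (k,q') (q,r)
      = (if (q:ℕ) = (k:ℕ)+1 then 1 else 0) * (if (q':ℕ) = (r:ℕ)+1 then 1 else 0)
      + (if (q:ℕ) = (k:ℕ) then 1 else 0) * (if (q':ℕ) = (r:ℕ)+1 then 1 else 0)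
      + (if (q:ℕ) = (k:ℕ)+1 then 1 else 0) * (if (q':ℕ) = (r:ℕ) then 1 else 0)
      - (if (q:ℕ) = (k:ℕ) then 1 else 0) * (if (q':ℕ) = (r:ℕ) then 1 else 0) := by
  simp only [aztecMat, Matrix.add_apply, Matrix.sub_apply, Matrix.kroneckerMap_apply,
    Lmat, Rmat, Matrix.transpose_apply, Matrix.of_apply]

/-- Elimination: every basis vector is congruent to its reduced representative. -/
lemma elim_basis {n : ℕ} (p : Fin (n+1)) :
    ∀ i : Fin n, Pi.single (i,p) (1:ℤ) - redv n (i:ℕ) (p:ℕ)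
      ∈ LinearMap.range (aztecMat n).mulVecLin := by
  induction p using Fin.induction with
  | zero =>
    intro i
    have hz : Pi.single (i,(0:Fin (n+1))) (1:ℤ) - redv n (i:ℕ) ((0 : Fin (n+1)):ℕ) = 0 := by
      funext kq
      rcases kq with ⟨k,q'⟩
      simp only [Pi.sub_apply, single_pair, redv, Fin.val_zero, cff_zero, Pi.zero_apply]
      split_ifs <;> omega
    rw [hz]
    exact Submodule.zero_mem _
  | succ p IH =>
    -- downward induction on i
    suffices h : ∀ t, ∀ i : Fin n, n - (i:ℕ) ≤ t →
        Pi.single (i,p.succ) (1:ℤ) - redv n (i:ℕ) ((p:ℕ)+1)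
          ∈ LinearMap.range (aztecMat n).mulVecLin by
      intro i
      have := h n i (by omega)
      simpa using this
    intro t
    induction t with
    | zero => intro i h; exfalso; have := i.isLt; omega
    | succ t iht =>
      intro i hle
      have hcol : (fun kq => aztecMat n kq (i.succ, p))
          ∈ LinearMap.range (aztecMat n).mulVecLin := by
        refine ⟨Pi.single (i.succ, p) 1, ?_⟩
        rw [Matrix.mulVecLin_apply, aztec_colv]
      by_cases hlast : (i:ℕ)+1 < n
      · -- interior case
        set i' : Fin n := ⟨(i:ℕ)+1, hlast⟩ with hi'
        have hIH1 := IH i   -- at p.castSucc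
        have hIH2 := IH i'
        have hIH3 := iht i' (by simp [hi']; omega)
        have hcolv : (fun kq => aztecMat n kq (i.succ, p))
            = (Pi.single (i,p.succ) (1:ℤ)) + Pi.single (i',p.succ) 1
              + Pi.single (i,p.castSucc) 1 - Pi.single (i',p.castSucc) 1 := by
          funext kq
          rcases kq with ⟨k,q'⟩
          simp only [Pi.add_apply, Pi.sub_apply, single_pair, aztec_entry,
            Fin.val_succ, Fin.coe_castSucc,
            show ((i' : Fin n) : ℕ) = (i:ℕ)+1 from rfl]
          split_ifs <;> omega
        have hredv : redv n (i:ℕ) ((p:ℕ)+1)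
            = redv n ((i:ℕ)+1) (p:ℕ) - redv n ((i:ℕ)+1) ((p:ℕ)+1) - redv n (i:ℕ) (p:ℕ) := by
          funext kq
          simp only [redv, Pi.sub_apply]
          split_ifs with h
          · rw [cff_rec]
          · ring
        have key : Pi.single (i,p.succ) (1:ℤ) - redv n (i:ℕ) ((p:ℕ)+1)
            = (fun kq => aztecMat n kq (i.succ, p))
              - (Pi.single (i',p.succ) 1 - redv n ((i':ℕ)) ((p:ℕ)+1))
              - (Pi.single (i,p.castSucc) 1 - redv n (i:ℕ) (p:ℕ))
              + (Pi.single (i',p.castSucc) 1 - redv n ((i':ℕ)) (p:ℕ)) := by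
          rw [hcolv, hredv]
          have : ((i':ℕ)) = (i:ℕ)+1 := rfl
          rw [this]
          abel
        rw [key]
        have h1 : ((p.castSucc : Fin (n+1)) : ℕ) = (p:ℕ) := by simp
        rw [h1] at hIH1 hIH2
        exact Submodule.add_mem _
          (Submodule.sub_mem _ (Submodule.sub_mem _ hcol hIH3) hIH1) hIH2
      · -- boundary case i = n-1
        have hIH1 := IH i
        have hcolv : (fun kq => aztecMat n kq (i.succ, p))
            = (Pi.single (i,p.succ) (1:ℤ)) + Pi.single (i,p.castSucc) 1 := by
          funext kq
          rcases kq with ⟨k,q'⟩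
          have hkl : (k:ℕ) < n := k.isLt
          simp only [Pi.add_apply, single_pair, aztec_entry,
            Fin.val_succ, Fin.coe_castSucc]
          have hil : (i:ℕ)+1 = n := by have := i.isLt; omega
          split_ifs <;> omega
        have hredv : redv n (i:ℕ) ((p:ℕ)+1) = - redv n (i:ℕ) (p:ℕ) := by
          funext kq
          simp only [redv, Pi.neg_apply]
          split_ifs with h
          · rw [cff_bd]
            have := kq.1.isLt
            have := i.isLt
            omega
          · ring
        have key : Pi.single (i,p.succ) (1:ℤ) - redv n (i:ℕ) ((p:ℕ)+1)
            = (fun kq => aztecMat n kq (i.succ, p))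
              - (Pi.single (i,p.castSucc) 1 - redv n (i:ℕ) (p:ℕ)) := by
          rw [hcolv, hredv]
          abel
        rw [key]
        have h1 : ((p.castSucc : Fin (n+1)) : ℕ) = (p:ℕ) := by simp
        rw [h1] at hIH1
        exact Submodule.sub_mem _ hcol hIH1
lemma SC_single {n : ℕ} (i : Fin n) (p : Fin (n+1)) :
    (Smat n * Cmat n).mulVec (Pi.single (i,p) 1) = redv n (i:ℕ) (p:ℕ) := by
  funext kq
  rcases kq with ⟨k,q'⟩
  rw [Matrix.mulVec_single]
  show (Smat n * Cmat n) (k,q') (i,p) * 1 = _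
  rw [mul_one, Matrix.mul_apply]
  simp only [Smat, Cmat, Matrix.of_apply]
  rw [Finset.sum_eq_single k]
  · simp only [redv]
    split_ifs with h1 h2 h2 <;> simp_all
  · intro b _ hb
    rw [if_neg (by tauto), zero_mul]
  · intro h; exact absurd (Finset.mem_univ _) h

lemma elim_all {n : ℕ} (v : Fin n × Fin (n+1) → ℤ) :
    v - (Smat n * Cmat n).mulVec v ∈ LinearMap.range (aztecMat n).mulVecLin := by
  have key : ∀ ip : Fin n × Fin (n+1),
      Pi.single ip (1:ℤ) - (Smat n * Cmat n).mulVec (Pi.single ip 1)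
        ∈ LinearMap.range (aztecMat n).mulVecLin := by
    rintro ⟨i,p⟩; rw [SC_single]; exact elim_basis p i
  let T : (Fin n × Fin (n+1) → ℤ) →ₗ[ℤ] (Fin n × Fin (n+1) → ℤ) :=
    LinearMap.id - (Smat n * Cmat n).mulVecLin
  have hT : ∀ w, T w = w - (Smat n * Cmat n).mulVec w := fun w => rfl
  rw [← hT]
  have hv : v = ∑ ip : Fin n × Fin (n+1),
      (v ip) • (Pi.single ip (1:ℤ) : Fin n × Fin (n+1) → ℤ) := by
    have h0 : ∀ ip : Fin n × Fin (n+1),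
        (v ip) • (Pi.single ip (1:ℤ) : Fin n × Fin (n+1) → ℤ) = Pi.single ip (v ip) := by
      intro ip
      rw [← Pi.single_smul, smul_eq_mul, mul_one]
    rw [Finset.sum_congr rfl (fun ip _ => h0 ip), Finset.univ_sum_single]
  rw [hv, map_sum]
  apply Submodule.sum_mem
  intro ip _
  rw [_root_.map_smul]
  refine Submodule.smul_mem _ _ ?_
  rw [hT]
  exact key ip

/-- Signed Pascal matrix. -/
def Wmat (n : ℕ) : Matrix (Fin n) (Fin n) ℤ :=
  Matrix.of fun j k => (-1:ℤ)^((j:ℕ)+1) * ((j:ℕ).choose (k:ℕ))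

/-- The signed Pascal matrix is an involution. -/
lemma winv {n : ℕ} (a b : Fin n) :
    ∑ k : Fin n, Wmat n a k * Wmat n k b = if a = b then 1 else 0 := by
  have h : ∀ k : Fin n, Wmat n a k * Wmat n k b
      = (-1:ℤ)^((a:ℕ)) * ((-1:ℤ)^(k:ℕ) * ((a:ℕ).choose (k:ℕ)) * ((k:ℕ).choose (b:ℕ))) := by
    intro k
    simp only [Wmat, Matrix.of_apply]
    rw [pow_succ, pow_succ]
    ring
  rw [Finset.sum_congr rfl (fun k _ => h k), ← Finset.mul_sum]
  rw [Fin.sum_univ_eq_sum_range (fun k => (-1:ℤ)^k * ((a:ℕ).choose k) * (k.choose (b:ℕ)))]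
  rw [alt_pascal (a:ℕ) (b:ℕ) n a.isLt]
  rcases eq_or_ne a b with h' | h'
  · subst h'
    rw [if_pos rfl, if_pos rfl, ← pow_add, ← two_mul, pow_mul]
    norm_num
  · rw [if_neg (fun hc => h' (Fin.ext hc)), if_neg h', mul_zero]

/-- W-transform of the relation vectors: exactly divisible columns. -/
lemma Wb_nat (j r N : ℕ) (hj : j < N) :
    ∑ k ∈ range N, (-1:ℤ)^(j+1) * (j.choose k) * (ff (r+1) k - ff r k)
      = (2:ℤ)^(j+1) * ((-1)^(r:ℕ) * ((r:ℕ).choose j)) := by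
  have h1 : ∀ k ∈ range N, (-1:ℤ)^(j+1) * (j.choose k) * (ff (r+1) k - ff r k)
      = ∑ j' ∈ range N, ((2:ℤ)^(j'+1) * (r.choose j') * (-1:ℤ)^(r+j))
          * ((-1:ℤ)^k * (j.choose k) * (k.choose j')) := by
    intro k hk
    simp only [Finset.mem_range] at hk
    rw [ff_diff]
    have hext : ∑ j' ∈ range (k+1), (2:ℤ)^(j'+1) * (k.choose j') * (r.choose j')
        = ∑ j' ∈ range N, (2:ℤ)^(j'+1) * (k.choose j') * (r.choose j') := by
      apply Finset.sum_subset
      · intro x hx; simp only [Finset.mem_range] at *; omega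
      · intro x _ hx
        simp only [Finset.mem_range] at hx
        rw [Nat.choose_eq_zero_of_lt (by omega)]
        ring
    rw [hext, Finset.mul_sum, Finset.mul_sum]
    apply Finset.sum_congr rfl
    intro j' _
    have hs : (-1:ℤ)^(j+1) * (-1:ℤ)^(k+r+1) = (-1:ℤ)^(r+j) * (-1:ℤ)^k := by
      rw [← pow_add, ← pow_add, show j+1+(k+r+1) = (r+j+k)+2 from by omega, pow_add]
      norm_num
    calc (-1:ℤ)^(j+1) * (j.choose k)
          * ((-1:ℤ)^(k+r+1) * ((2:ℤ)^(j'+1) * (k.choose j') * (r.choose j')))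
        = ((-1:ℤ)^(j+1) * (-1:ℤ)^(k+r+1)) * ((j.choose k : ℤ)
            * ((2:ℤ)^(j'+1) * (k.choose j') * (r.choose j'))) := by ring
      _ = ((-1:ℤ)^(r+j) * (-1:ℤ)^k) * ((j.choose k : ℤ)
            * ((2:ℤ)^(j'+1) * (k.choose j') * (r.choose j'))) := by rw [hs]
      _ = ((2:ℤ)^(j'+1) * (r.choose j') * (-1:ℤ)^(r+j))
            * ((-1:ℤ)^k * (j.choose k) * (k.choose j')) := by ring
  rw [Finset.sum_congr rfl h1, Finset.sum_comm]
  have h2 : ∀ j' ∈ range N,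
      ∑ k ∈ range N, ((2:ℤ)^(j'+1) * (r.choose j') * (-1:ℤ)^(r+j))
          * ((-1:ℤ)^k * (j.choose k) * (k.choose j'))
      = (if j = j' then ((2:ℤ)^(j'+1) * (r.choose j') * (-1:ℤ)^(r+j)) * (-1:ℤ)^j else 0) := by
    intro j' _
    rw [← Finset.mul_sum, alt_pascal j j' N hj, mul_ite, mul_zero]
  rw [Finset.sum_congr rfl h2]
  rw [Finset.sum_ite_eq (range N) j
    (fun j' => ((2:ℤ)^(j'+1) * (r.choose j') * (-1:ℤ)^(r+j)) * (-1:ℤ)^j)]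
  rw [if_pos (Finset.mem_range.mpr hj)]
  have hjj : (-1:ℤ)^j * (-1:ℤ)^j = 1 := by rw [← mul_pow]; norm_num
  rw [pow_add]
  linear_combination ((2:ℤ)^(j+1) * ((r:ℕ).choose j : ℤ) * (-1:ℤ)^r) * hjj
/-- Generic decomposition of a vector into single-supported pieces. -/
lemma pi_sum_single {ι : Type*} [Fintype ι] [DecidableEq ι] (v : ι → ℤ) :
    v = ∑ i : ι, (v i) • (Pi.single i (1:ℤ) : ι → ℤ) := by
  have h0 : ∀ i : ι, (v i) • (Pi.single i (1:ℤ) : ι → ℤ) = Pi.single i (v i) := by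
    intro i
    rw [← Pi.single_smul, smul_eq_mul, mul_one]
  rw [Finset.sum_congr rfl (fun i _ => h0 i), Finset.univ_sum_single]

def castL (m : ℕ) : ℤ →ₗ[ℤ] ZMod m := (Int.castAddHom (ZMod m)).toIntLinearMap

/-- The cokernel invariant map. -/
def Fmap (n : ℕ) : (Fin n × Fin (n+1) → ℤ) →ₗ[ℤ] ((k : Fin n) → ZMod (2^((k:ℕ)+1))) :=
  LinearMap.pi fun j => (castL (2^((j:ℕ)+1))).comp
    ((LinearMap.proj j).comp ((Wmat n).mulVecLin.comp (Cmat n).mulVecLin))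

lemma Fmap_apply {n : ℕ} (v : Fin n × Fin (n+1) → ℤ) (j : Fin n) :
    Fmap n v j = ((((Wmat n).mulVec ((Cmat n).mulVec v)) j : ℤ) : ZMod (2^((j:ℕ)+1))) := rfl

lemma Cmat_col {n : ℕ} (q : Fin (n+1)) (r : Fin n) :
    (Cmat n).mulVec ((aztecMat n).mulVec (Pi.single (q,r) 1))
      = fun k : Fin n => if (q:ℕ) = 0 then ff ((r:ℕ)+1) (k:ℕ) - ff (r:ℕ) (k:ℕ) else 0 := by
  funext k
  rw [aztec_colv]
  show ∑ ip : Fin n × Fin (n+1), Cmat n k ip * aztecMat n ip (q,r) = _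
  simp only [Cmat, Matrix.of_apply]
  exact colsum q r k

lemma FM_col {n : ℕ} (q : Fin (n+1)) (r : Fin n) :
    Fmap n ((aztecMat n).mulVec (Pi.single (q,r) 1)) = 0 := by
  funext j
  rw [Fmap_apply, Cmat_col]
  by_cases hq : (q:ℕ) = 0
  · have hfun : (fun k : Fin n => if (q:ℕ) = 0 then ff ((r:ℕ)+1) (k:ℕ) - ff (r:ℕ) (k:ℕ) else 0)
        = fun k : Fin n => ff ((r:ℕ)+1) (k:ℕ) - ff (r:ℕ) (k:ℕ) := by
      funext k; rw [if_pos hq]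
    rw [hfun]
    have hW : ((Wmat n).mulVec (fun k => ff ((r:ℕ)+1) (k:ℕ) - ff (r:ℕ) (k:ℕ))) j
        = (2:ℤ)^((j:ℕ)+1) * ((-1)^(r:ℕ) * ((r:ℕ).choose (j:ℕ))) := by
      show ∑ k : Fin n, Wmat n j k * (ff ((r:ℕ)+1) (k:ℕ) - ff (r:ℕ) (k:ℕ)) = _
      have hconv : ∀ k : Fin n, Wmat n j k * (ff ((r:ℕ)+1) (k:ℕ) - ff (r:ℕ) (k:ℕ))
          = (fun m => (-1:ℤ)^((j:ℕ)+1) * ((j:ℕ).choose m) * (ff ((r:ℕ)+1) m - ff (r:ℕ) m)) (k:ℕ) := by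
        intro k; simp [Wmat]
      have hr := Fin.sum_univ_eq_sum_range
        (fun m => (-1:ℤ)^((j:ℕ)+1) * (((j:ℕ)).choose m : ℤ) * (ff ((r:ℕ)+1) m - ff (r:ℕ) m)) n
      rw [Finset.sum_congr rfl (fun k _ => hconv k), hr]
      exact Wb_nat (j:ℕ) (r:ℕ) n j.isLt
    rw [hW]
    have : ((((2:ℤ)^((j:ℕ)+1) * ((-1)^(r:ℕ) * ((r:ℕ).choose (j:ℕ)))) : ℤ) : ZMod (2^((j:ℕ)+1))) = 0 := by
      rw [ZMod.intCast_zmod_eq_zero_iff_dvd]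
      push_cast
      exact Dvd.intro _ rfl
    rw [this]
    rfl
  · have h0 : (fun k : Fin n => if (q:ℕ) = 0 then ff ((r:ℕ)+1) (k:ℕ) - ff (r:ℕ) (k:ℕ) else 0)
        = (0 : Fin n → ℤ) := by
      funext k; rw [if_neg hq]; rfl
    rw [h0, Matrix.mulVec_zero]
    show ((0:ℤ) : ZMod (2^((j:ℕ)+1))) = 0
    exact Int.cast_zero
lemma FM_vanish {n : ℕ} (v : Fin (n+1) × Fin n → ℤ) :
    Fmap n ((aztecMat n).mulVec v) = 0 := by
  rw [pi_sum_single v]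
  have : (aztecMat n).mulVec (∑ qr : Fin (n+1) × Fin n, (v qr) • (Pi.single qr (1:ℤ) : _))
      = ∑ qr : Fin (n+1) × Fin n, (v qr) • ((aztecMat n).mulVec (Pi.single qr 1)) := by
    rw [← Matrix.mulVecLin_apply, map_sum]
    apply Finset.sum_congr rfl
    intro qr _
    rw [_root_.map_smul, Matrix.mulVecLin_apply]
  rw [this, map_sum]
  apply Finset.sum_eq_zero
  intro qr _
  rw [_root_.map_smul]
  rcases qr with ⟨q,r⟩
  rw [FM_col, smul_zero]
lemma CS_id {n : ℕ} : Cmat n * Smat n = 1 := by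
  ext k k'
  rw [Matrix.mul_apply]
  rw [Finset.sum_eq_single ((k', (0 : Fin (n+1))) : Fin n × Fin (n+1))]
  · simp only [Cmat, Smat, Matrix.of_apply, Fin.val_zero, cff_zero, Matrix.one_apply]
    simp [Fin.ext_iff]
  · rintro ⟨i,p⟩ _ hb
    simp only [Smat, Matrix.of_apply]
    rw [if_neg, mul_zero]
    rintro ⟨h1, h2⟩
    apply hb
    have : p = 0 := Fin.ext h1
    rw [this, h2]
  · intro h; exact absurd (Finset.mem_univ _) h

lemma WW_id {n : ℕ} : Wmat n * Wmat n = 1 := by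
  ext a b
  rw [Matrix.mul_apply, winv, Matrix.one_apply]

lemma Fsurj {n : ℕ} : Function.Surjective (Fmap n) := by
  intro y
  have hl : ∀ j : Fin n, ∃ m : ℤ, (m : ZMod (2^((j:ℕ)+1))) = y j :=
    fun j => ZMod.intCast_surjective (y j)
  choose yl hyl using hl
  refine ⟨(Smat n).mulVec ((Wmat n).mulVec yl), ?_⟩
  funext j
  rw [Fmap_apply,
    Matrix.mulVec_mulVec ((Wmat n).mulVec yl) (Cmat n) (Smat n), CS_id, Matrix.one_mulVec,
    Matrix.mulVec_mulVec yl (Wmat n) (Wmat n), WW_id, Matrix.one_mulVec]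
  exact hyl j

/-- The triple-sum identity showing `x = B z`. -/
lemma Bz_nat (k N : ℕ) (hk : k < N) (Y : ℕ → ℤ) :
    ∑ r ∈ range N, (ff (r+1) k - ff r k) * (∑ j ∈ range N, (-1:ℤ)^j * (j.choose r) * Y j)
      = ∑ j ∈ range N, ((-1:ℤ)^(k+1) * ((2:ℤ)^(j+1) * (k.choose j))) * Y j := by
  set G : ℕ → ℕ → ℤ :=
    fun j' j => (2:ℤ)^(j'+1) * (k.choose j') * Y j * (-1:ℤ)^(k+1) * (-1:ℤ)^j with hG
  have h1 : ∀ r ∈ range N, (ff (r+1) k - ff r k) * (∑ j ∈ range N, (-1:ℤ)^j * (j.choose r) * Y j)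
      = ∑ j ∈ range N, ∑ j' ∈ range N, G j' j * ((-1:ℤ)^r * (j.choose r) * (r.choose j')) := by
    intro r hr
    rw [ff_diff]
    have hext : ∑ j' ∈ range (k+1), (2:ℤ)^(j'+1) * (k.choose j') * (r.choose j')
        = ∑ j' ∈ range N, (2:ℤ)^(j'+1) * (k.choose j') * (r.choose j') := by
      apply Finset.sum_subset
      · intro a ha; simp only [Finset.mem_range] at *; omega
      · intro a _ ha
        simp only [Finset.mem_range] at ha
        rw [Nat.choose_eq_zero_of_lt (by omega : k < a)]
        ring
    rw [hext, Finset.mul_sum]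
    apply Finset.sum_congr rfl
    intro j _
    rw [Finset.mul_sum, Finset.sum_mul]
    apply Finset.sum_congr rfl
    intro j' _
    have hsgn : (-1:ℤ)^(k+r+1) = (-1:ℤ)^(k+1) * (-1:ℤ)^r := by
      rw [← pow_add, show k+1+r = k+r+1 from by omega]
    rw [hsgn, hG]
    ring
  rw [Finset.sum_congr rfl h1, Finset.sum_comm]
  have h2 : ∀ j ∈ range N,
      ∑ r ∈ range N, ∑ j' ∈ range N, G j' j * ((-1:ℤ)^r * (j.choose r) * (r.choose j'))
        = G j j * (-1:ℤ)^j := by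
    intro j hj
    simp only [Finset.mem_range] at hj
    rw [Finset.sum_comm]
    have h3 : ∀ j' ∈ range N,
        ∑ r ∈ range N, G j' j * ((-1:ℤ)^r * (j.choose r) * (r.choose j'))
          = if j = j' then G j' j * (-1:ℤ)^j else 0 := by
      intro j' _
      rw [← Finset.mul_sum]
      have harr : ∑ r ∈ range N, (-1:ℤ)^r * (j.choose r) * (r.choose j')
          = if j = j' then (-1:ℤ)^j else 0 := alt_pascal j j' N hj
      rw [harr, mul_ite, mul_zero]
    rw [Finset.sum_congr rfl h3]
    rw [Finset.sum_ite_eq (range N) j (fun j' => G j' j * (-1:ℤ)^j),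
      if_pos (Finset.mem_range.mpr hj)]
  rw [Finset.sum_congr rfl h2]
  apply Finset.sum_congr rfl
  intro j _
  have hjj : (-1:ℤ)^j * (-1:ℤ)^j = 1 := by rw [← mul_pow]; norm_num
  rw [hG]
  simp only []
  linear_combination ((2:ℤ)^(j+1) * (k.choose j) * Y j * (-1:ℤ)^(k+1)) * hjj

lemma ker_sub {n : ℕ} (v : Fin n × Fin (n+1) → ℤ) (hv : Fmap n v = 0) :
    v ∈ LinearMap.range (aztecMat n).mulVecLin := by
  set x : Fin n → ℤ := (Cmat n).mulVec v with hxdef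
  have hdvd : ∀ j : Fin n, ((2:ℤ)^((j:ℕ)+1)) ∣ ((Wmat n).mulVec x) j := by
    intro j
    have hj := congrFun hv j
    rw [Fmap_apply] at hj
    have hj' : ((((Wmat n).mulVec x) j : ℤ) : ZMod (2^((j:ℕ)+1))) = 0 := hj
    rw [ZMod.intCast_zmod_eq_zero_iff_dvd] at hj'
    have : (((2:ℕ)^((j:ℕ)+1) : ℕ) : ℤ) = (2:ℤ)^((j:ℕ)+1) := by push_cast; rfl
    rwa [this] at hj'
  choose y hy using hdvd
  have hx : x = (Wmat n).mulVec (fun j => (2:ℤ)^((j:ℕ)+1) * y j) := by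
    have h2 : (fun j : Fin n => (2:ℤ)^((j:ℕ)+1) * y j) = (Wmat n).mulVec x :=
      funext fun j => (hy j).symm
    rw [h2, Matrix.mulVec_mulVec, WW_id, Matrix.one_mulVec]
  set Y : ℕ → ℤ := fun m => if h : m < n then y ⟨m,h⟩ else 0 with hY
  set z : Fin n → ℤ := fun r => ∑ j ∈ range n, (-1:ℤ)^j * (j.choose (r:ℕ)) * Y j with hz
  have hxB : ∀ k : Fin n, x k
      = ∑ r : Fin n, (ff ((r:ℕ)+1) (k:ℕ) - ff (r:ℕ) (k:ℕ)) * z r := by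
    intro k
    have hR := Fin.sum_univ_eq_sum_range
      (fun m => (ff (m+1) (k:ℕ) - ff m (k:ℕ))
        * (∑ j ∈ range n, (-1:ℤ)^j * (j.choose m) * Y j)) n
    have hRHS : ∑ r : Fin n, (ff ((r:ℕ)+1) (k:ℕ) - ff (r:ℕ) (k:ℕ)) * z r
        = ∑ j ∈ range n, ((-1:ℤ)^((k:ℕ)+1) * ((2:ℤ)^(j+1) * ((k:ℕ).choose j))) * Y j := by
      rw [← Bz_nat (k:ℕ) n k.isLt Y, ← hR]
    rw [hRHS]
    -- LHS: x k via hx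
    have hLHS : x k = ∑ j : Fin n, Wmat n k j * ((2:ℤ)^((j:ℕ)+1) * y j) := by
      rw [hx]; rfl
    rw [hLHS]
    have hL := Fin.sum_univ_eq_sum_range
      (fun m => ((-1:ℤ)^((k:ℕ)+1) * ((2:ℤ)^(m+1) * ((k:ℕ).choose m))) * Y m) n
    rw [← hL]
    apply Finset.sum_congr rfl
    intro j _
    simp only [Wmat, Matrix.of_apply, hY]
    rw [dif_pos j.isLt]
    ring_nf
  -- assemble membership
  have hdecomp : v = (v - (Smat n * Cmat n).mulVec v) + (Smat n).mulVec x := by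
    rw [hxdef, ← Matrix.mulVec_mulVec]
    abel
  rw [hdecomp]
  apply Submodule.add_mem _ (elim_all v)
  have hxsum : x = ∑ r : Fin n,
      z r • (fun k : Fin n => ff ((r:ℕ)+1) (k:ℕ) - ff (r:ℕ) (k:ℕ)) := by
    funext k
    rw [hxB k, Finset.sum_apply]
    apply Finset.sum_congr rfl
    intro r _
    simp [mul_comm]
  rw [hxsum]
  have hS : (Smat n).mulVec (∑ r : Fin n,
      z r • (fun k : Fin n => ff ((r:ℕ)+1) (k:ℕ) - ff (r:ℕ) (k:ℕ)))
      = ∑ r : Fin n, z r • ((Smat n).mulVec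
          (fun k : Fin n => ff ((r:ℕ)+1) (k:ℕ) - ff (r:ℕ) (k:ℕ))) := by
    rw [← Matrix.mulVecLin_apply, map_sum]
    apply Finset.sum_congr rfl
    intro r _
    rw [_root_.map_smul, Matrix.mulVecLin_apply]
  rw [hS]
  apply Submodule.sum_mem
  intro r _
  apply Submodule.smul_mem
  -- σ(B column r) ∈ range
  have hw : (aztecMat n).mulVec (Pi.single ((0 : Fin (n+1)), r) 1)
      ∈ LinearMap.range (aztecMat n).mulVecLin := ⟨Pi.single ((0 : Fin (n+1)), r) 1, rfl⟩
  have h1 := elim_all ((aztecMat n).mulVec (Pi.single ((0 : Fin (n+1)), r) 1))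
  have h2 := Submodule.sub_mem _ hw h1
  rw [sub_sub_cancel] at h2
  have h3 : (Smat n * Cmat n).mulVec ((aztecMat n).mulVec (Pi.single ((0 : Fin (n+1)), r) 1))
      = (Smat n).mulVec (fun k : Fin n => ff ((r:ℕ)+1) (k:ℕ) - ff (r:ℕ) (k:ℕ)) := by
    rw [← Matrix.mulVec_mulVec, Cmat_col]
    congr 1
  rwa [h3] at h2

theorem coker_aztecMat (n : ℕ) :
    Nonempty (((Fin n × Fin (n + 1) → ℤ) ⧸ LinearMap.range (aztecMat n).mulVecLin) ≃ₗ[ℤ]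
      ((k : Fin n) → ZMod (2 ^ ((k : ℕ) + 1)))) := by
  have hker : LinearMap.range (aztecMat n).mulVecLin = LinearMap.ker (Fmap n) := by
    apply le_antisymm
    · rintro w ⟨u, rfl⟩
      rw [LinearMap.mem_ker, Matrix.mulVecLin_apply]
      exact FM_vanish u
    · intro u hu
      exact ker_sub u (LinearMap.mem_ker.mp hu)
  exact ⟨(Submodule.quotEquivOfEq _ _ hker).trans ((Fmap n).quotKerEquivOfSurjective Fsurj)⟩
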